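/- Let α₁ = (3+√13)/2 and α₂ = (3−√13)/2. For every integer s ≥ 1, the real number (α₁^s + 1)(α₂^s + 1) is an integer with absolute value greater than 1; moreover it is divisible by 3 when s is odd, and when s is even both factors α₁^s + 1 and α₂^s + 1 are greater than 1. -/
import Mathlib

private def Lu : ℕ → ℤ
  | 0 => 2
  | 1 => 3
  | (n+2) => 3 * Lu (n+1) + Lu n

private lemma Lu_ge : ∀ n, 2 ≤ Lu n
  | 0 => by simp [Lu]
  | 1 => by simp [Lu]
  | (n+2) => by
      have h1 := Lu_ge (n+1)
      have h2 := Lu_ge n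
      simp only [Lu]; omega

private lemma Lu_odd_div : ∀ n, Odd n → (3 : ℤ) ∣ Lu n
  | 0 => by intro h; simp at h
  | 1 => by intro _; simp [Lu]
  | (n+2) => by
      intro h
      have hn : Odd n := by
        rcases h with ⟨k, hk⟩
        exact ⟨k - 1, by omega⟩
      have := Lu_odd_div n hn
      simp only [Lu]
      omega

private lemma Lu_cast (α₁ α₂ : ℝ) (hsum : α₁ + α₂ = 3) (hsq₁ : α₁ ^ 2 = 3 * α₁ + 1)
    (hsq₂ : α₂ ^ 2 = 3 * α₂ + 1) : ∀ n, α₁ ^ n + α₂ ^ n = (Lu n : ℝ)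
  | 0 => by norm_num [Lu]
  | 1 => by simp [Lu, hsum]
  | (n+2) => by
      have h1 := Lu_cast α₁ α₂ hsum hsq₁ hsq₂ (n+1)
      have h2 := Lu_cast α₁ α₂ hsum hsq₁ hsq₂ n
      have e1 : α₁ ^ (n+2) = 3 * α₁ ^ (n+1) + α₁ ^ n := by
        have : α₁ ^ (n+2) = α₁ ^ n * α₁ ^ 2 := by ring
        rw [this, hsq₁]; ring
      have e2 : α₂ ^ (n+2) = 3 * α₂ ^ (n+1) + α₂ ^ n := by
        have : α₂ ^ (n+2) = α₂ ^ n * α₂ ^ 2 := by ring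
        rw [this, hsq₂]; ring
      rw [e1, e2]
      simp only [Lu]
      push_cast
      linarith

/-- Let `α₁ = (3+√13)/2` and `α₂ = (3−√13)/2`.  For every integer `s ≥ 1`, the
real number `(α₁^s + 1)(α₂^s + 1)` is an integer of absolute value greater
than `1`; it is divisible by `3` when `s` is odd, and when `s` is even both
factors `α₁^s + 1` and `α₂^s + 1` are greater than `1`. -/
theorem norm_of_power_add_one
    (α₁ α₂ : ℝ) (h₁ : α₁ = (3 + Real.sqrt 13) / 2) (h₂ : α₂ = (3 - Real.sqrt 13) / 2)
    (s : ℕ) (hs : 1 ≤ s) :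
    (∃ m : ℤ, (α₁ ^ s + 1) * (α₂ ^ s + 1) = (m : ℝ) ∧ 1 < |m| ∧ (Odd s → (3 : ℤ) ∣ m)) ∧
      (Even s → 1 < α₁ ^ s + 1 ∧ 1 < α₂ ^ s + 1) := by
  have hsqrt : Real.sqrt 13 ^ 2 = 13 := Real.sq_sqrt (by norm_num)
  have hnn : (0:ℝ) ≤ Real.sqrt 13 := Real.sqrt_nonneg _
  have hsum : α₁ + α₂ = 3 := by rw [h₁, h₂]; ring
  have hprod : α₁ * α₂ = -1 := by
    rw [h₁, h₂]
    have : (3 + Real.sqrt 13) / 2 * ((3 - Real.sqrt 13) / 2)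
        = (9 - Real.sqrt 13 ^ 2) / 4 := by ring
    rw [this, hsqrt]; norm_num
  have hsq₁ : α₁ ^ 2 = 3 * α₁ + 1 := by
    rw [h₁]
    have : ((3 + Real.sqrt 13) / 2) ^ 2 = (9 + 6 * Real.sqrt 13 + Real.sqrt 13 ^ 2) / 4 := by ring
    rw [this, hsqrt]; ring
  have hsq₂ : α₂ ^ 2 = 3 * α₂ + 1 := by
    rw [h₂]
    have : ((3 - Real.sqrt 13) / 2) ^ 2 = (9 - 6 * Real.sqrt 13 + Real.sqrt 13 ^ 2) / 4 := by ring
    rw [this, hsqrt]; ring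
  have hcast := Lu_cast α₁ α₂ hsum hsq₁ hsq₂ s
  constructor
  · refine ⟨Lu s + 1 + (-1) ^ s, ?_, ?_, ?_⟩
    · have expand : (α₁ ^ s + 1) * (α₂ ^ s + 1)
          = (α₁ * α₂) ^ s + (α₁ ^ s + α₂ ^ s) + 1 := by
        rw [mul_pow]; ring
      rw [expand, hprod, hcast]
      push_cast
      ring
    · have hge := Lu_ge s
      rcases Nat.even_or_odd s with he | ho
      · rw [he.neg_one_pow]
        rw [abs_of_pos (by omega)]; omega
      · rw [ho.neg_one_pow]
        rw [abs_of_pos (by omega)]; omega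
    · intro ho
      have := Lu_odd_div s ho
      rw [ho.neg_one_pow]
      simpa using this
  · intro he
    have hα₁ : 1 < α₁ := by
      rw [h₁]; nlinarith
    have hα₂ : α₂ ≠ 0 := by
      intro h0
      have : α₁ * α₂ = 0 := by rw [h0]; ring
      rw [hprod] at this; norm_num at this
    constructor
    · have : 1 < α₁ ^ s := one_lt_pow₀ hα₁ (by omega)
      linarith
    · have : 0 < α₂ ^ s := he.pow_pos hα₂
      linarith
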